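/- Let A be a weak bialgebra over a field K. Then A^L and A^R are unital subalgebras of A (both contain 1 and are closed under multiplication), and every element of A^L commutes with every element of A^R: x^L y^R = y^R x^L for all x^L ∈ A^L and y^R ∈ A^R. -/
import Mathlib


open TensorProduct

set_option maxHeartbeats 1000000
set_option synthInstance.maxHeartbeats 400000
set_option maxRecDepth 8000

noncomputable section

variable (K : Type*) [Field K] (A : Type*) [Ring A] [Algebra K A]

/-- `Π^L(x) = Σ ε(1₍₁₎ x) 1₍₂₎`. -/
def piL (Δ : A →ₗ[K] A ⊗[K] A) (ε : A →ₗ[K] K) : A →ₗ[K] A :=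
  (TensorProduct.lid K A).toLinearMap ∘ₗ ε.rTensor A ∘ₗ
    LinearMap.mulLeft K (Δ 1) ∘ₗ (TensorProduct.mk K A A).flip 1

/-- `Π^R(x) = Σ 1₍₁₎ ε(x 1₍₂₎)`. -/
def piR (Δ : A →ₗ[K] A ⊗[K] A) (ε : A →ₗ[K] K) : A →ₗ[K] A :=
  (TensorProduct.rid K A).toLinearMap ∘ₗ ε.lTensor A ∘ₗ
    LinearMap.mulRight K (Δ 1) ∘ₗ TensorProduct.mk K A A 1

/-- A weak bialgebra structure on the `K`-algebra `A`, with comultiplication `Δ`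
and counit `ε`. -/
structure WeakBialgebra (Δ : A →ₗ[K] A ⊗[K] A) (ε : A →ₗ[K] K) : Prop where
  coassoc : ∀ x : A,
    (TensorProduct.assoc K A A A) (Δ.rTensor A (Δ x)) = Δ.lTensor A (Δ x)
  counit_left : ∀ x : A, (TensorProduct.lid K A) (ε.rTensor A (Δ x)) = x
  counit_right : ∀ x : A, (TensorProduct.rid K A) (ε.lTensor A (Δ x)) = x
  comul_mul : ∀ x y : A, Δ (x * y) = Δ x * Δ y
  weak_counit_a : ∀ x y z : A,
    ε (x * y * z) =
      LinearMap.mul' K K (TensorProduct.map (ε ∘ₗ LinearMap.mulLeft K x)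
        (ε ∘ₗ LinearMap.mulRight K z) (Δ y))
  weak_counit_b : ∀ x y z : A,
    ε (x * y * z) =
      LinearMap.mul' K K (TensorProduct.map (ε ∘ₗ LinearMap.mulRight K z)
        (ε ∘ₗ LinearMap.mulLeft K x) (Δ y))
  weak_comul_unit_a :
    Δ.rTensor A (Δ 1) =
      (Δ 1 ⊗ₜ[K] (1 : A)) * ((TensorProduct.assoc K A A A).symm ((1 : A) ⊗ₜ[K] Δ 1))
  weak_comul_unit_b :
    Δ.rTensor A (Δ 1) =
      ((TensorProduct.assoc K A A A).symm ((1 : A) ⊗ₜ[K] Δ 1)) * (Δ 1 ⊗ₜ[K] (1 : A))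

/-- A weak Hopf algebra structure: a weak bialgebra together with an antipode `S`. -/
structure WeakHopfAlgebra (Δ : A →ₗ[K] A ⊗[K] A) (ε : A →ₗ[K] K) (S : A →ₗ[K] A) : Prop where
  toWeakBialgebra : WeakBialgebra K A Δ ε
  antipode_a : ∀ x : A,
    LinearMap.mul' K A (LinearMap.lTensor A S (Δ x)) = piL K A Δ ε x
  antipode_b : ∀ x : A,
    LinearMap.mul' K A (LinearMap.rTensor A S (Δ x)) = piR K A Δ ε x
  antipode_c : ∀ x : A,
    LinearMap.mul' K A (TensorProduct.map S (LinearMap.mul' K A ∘ₗ LinearMap.lTensor A S)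
      (LinearMap.lTensor A Δ (Δ x))) = S x

section Aux

variable {K A}
variable (ε : A →ₗ[K] K)

/-- `Φ_x (u ⊗ v) = ε(u x) v`. -/
def auxPhi (x : A) : A ⊗[K] A →ₗ[K] A :=
  (TensorProduct.lid K A).toLinearMap ∘ₗ (ε ∘ₗ LinearMap.mulRight K x).rTensor A

@[simp] lemma auxPhi_tmul (x u v : A) : auxPhi ε x (u ⊗ₜ[K] v) = ε (u * x) • v := by
  simp [auxPhi]

/-- `Ψ_y (u ⊗ v) = ε(y v) u`. -/
def auxPsi (y : A) : A ⊗[K] A →ₗ[K] A :=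
  (TensorProduct.rid K A).toLinearMap ∘ₗ (ε ∘ₗ LinearMap.mulLeft K y).lTensor A

@[simp] lemma auxPsi_tmul (y u v : A) : auxPsi ε y (u ⊗ₜ[K] v) = ε (y * v) • u := by
  simp [auxPsi]

/-- `Φ̂_x (u ⊗ W) = ε(u x) W` on `A ⊗ (A ⊗ A)`. -/
def auxPhiT (x : A) : A ⊗[K] (A ⊗[K] A) →ₗ[K] A ⊗[K] A :=
  (TensorProduct.lid K (A ⊗[K] A)).toLinearMap ∘ₗ
    (ε ∘ₗ LinearMap.mulRight K x).rTensor (A ⊗[K] A)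

@[simp] lemma auxPhiT_tmul (x u : A) (W : A ⊗[K] A) :
    auxPhiT ε x (u ⊗ₜ[K] W) = ε (u * x) • W := by
  simp [auxPhiT]

/-- `Ψ̂_y (W ⊗ v) = ε(y v) W` on `(A ⊗ A) ⊗ A`. -/
def auxPsiT (y : A) : (A ⊗[K] A) ⊗[K] A →ₗ[K] A ⊗[K] A :=
  (TensorProduct.rid K (A ⊗[K] A)).toLinearMap ∘ₗ
    (ε ∘ₗ LinearMap.mulLeft K y).lTensor (A ⊗[K] A)

@[simp] lemma auxPsiT_tmul (y v : A) (W : A ⊗[K] A) :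
    auxPsiT ε y (W ⊗ₜ[K] v) = ε (y * v) • W := by
  simp [auxPsiT]

variable (Δ : A →ₗ[K] A ⊗[K] A)

lemma auxPhi_comul_one (x : A) : auxPhi ε x (Δ 1) = piL K A Δ ε x := by
  have h : ∀ E : A ⊗[K] A,
      (TensorProduct.lid K A) (ε.rTensor A (E * (x ⊗ₜ[K] 1))) = auxPhi ε x E := by
    intro E
    induction E using TensorProduct.induction_on with
    | zero => simp
    | tmul u v => simp [Algebra.TensorProduct.tmul_mul_tmul]
    | add p q hp hq => simp [add_mul, hp, hq]
  simpa [piL] using (h (Δ 1)).symm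

lemma auxPsi_comul_one (y : A) : auxPsi ε y (Δ 1) = piR K A Δ ε y := by
  have h : ∀ E : A ⊗[K] A,
      (TensorProduct.rid K A) (ε.lTensor A ((1 ⊗ₜ[K] y) * E)) = auxPsi ε y E := by
    intro E
    induction E using TensorProduct.induction_on with
    | zero => simp
    | tmul u v => simp [Algebra.TensorProduct.tmul_mul_tmul]
    | add p q hp hq => simp [mul_add, hp, hq]
  simpa [piR] using (h (Δ 1)).symm

/-- `Φ̂_x ∘ (id ⊗ Δ) = Δ ∘ Φ_x`. -/
lemma auxPhiT_lTensor (x : A) (E : A ⊗[K] A) :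
    auxPhiT ε x (Δ.lTensor A E) = Δ (auxPhi ε x E) := by
  induction E using TensorProduct.induction_on with
  | zero => simp
  | tmul u v => simp
  | add p q hp hq => simp [hp, hq]

/-- `Ψ̂_y ∘ (Δ ⊗ id) = Δ ∘ Ψ_y`. -/
lemma auxPsiT_rTensor (y : A) (E : A ⊗[K] A) :
    auxPsiT ε y (Δ.rTensor A E) = Δ (auxPsi ε y E) := by
  induction E using TensorProduct.induction_on with
  | zero => simp
  | tmul u v => simp
  | add p q hp hq => simp [hp, hq]

/-- `Φ_x (E * (1 ⊗ c)) = Φ_x E * c`. -/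
lemma auxPhi_mul_right (x c : A) (E : A ⊗[K] A) :
    auxPhi ε x (E * ((1 : A) ⊗ₜ[K] c)) = auxPhi ε x E * c := by
  induction E using TensorProduct.induction_on with
  | zero => simp
  | tmul u v => simp [Algebra.TensorProduct.tmul_mul_tmul, smul_mul_assoc]
  | add p q hp hq => simp [add_mul, hp, hq]

/-- `Φ_x ((1 ⊗ c) * E) = c * Φ_x E`. -/
lemma auxPhi_mul_left (x c : A) (E : A ⊗[K] A) :
    auxPhi ε x (((1 : A) ⊗ₜ[K] c) * E) = c * auxPhi ε x E := by
  induction E using TensorProduct.induction_on with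
  | zero => simp
  | tmul u v => simp [Algebra.TensorProduct.tmul_mul_tmul, mul_smul_comm]
  | add p q hp hq => simp [mul_add, hp, hq]

lemma auxPhiT_assoc_tmul (x v : A) (R : A ⊗[K] A) :
    auxPhiT ε x ((TensorProduct.assoc K A A A) (R ⊗ₜ[K] v)) = (auxPhi ε x R) ⊗ₜ[K] v := by
  induction R using TensorProduct.induction_on with
  | zero => simp
  | tmul p q => simp [TensorProduct.smul_tmul']
  | add p q hp hq => simp [add_tmul, hp, hq]

/-- Key computation for Lemma B. -/
lemma auxPhiT_assoc_b (x : A) (P Q : A ⊗[K] A) :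
    auxPhiT ε x ((TensorProduct.assoc K A A A)
      (((TensorProduct.assoc K A A A).symm ((1 : A) ⊗ₜ[K] P)) * (Q ⊗ₜ[K] (1 : A)))) =
    P * (auxPhi ε x Q ⊗ₜ[K] (1 : A)) := by
  induction P using TensorProduct.induction_on with
  | zero => simp [TensorProduct.tmul_zero]
  | tmul u v =>
    rw [TensorProduct.assoc_symm_tmul]
    rw [Algebra.TensorProduct.tmul_mul_tmul, mul_one]
    rw [auxPhiT_assoc_tmul, auxPhi_mul_left]
    rw [Algebra.TensorProduct.tmul_mul_tmul, mul_one]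
  | add p q hp hq => simp only [TensorProduct.tmul_add, map_add, add_mul, hp, hq]

/-- Key computation for Lemma A'. -/
lemma auxPsiT_assoc_a (y : A) (P Q : A ⊗[K] A) :
    auxPsiT ε y ((P ⊗ₜ[K] (1 : A)) *
      ((TensorProduct.assoc K A A A).symm ((1 : A) ⊗ₜ[K] Q))) =
    P * ((1 : A) ⊗ₜ[K] auxPsi ε y Q) := by
  induction Q using TensorProduct.induction_on with
  | zero => simp [TensorProduct.tmul_zero]
  | tmul u v =>
    rw [TensorProduct.assoc_symm_tmul]
    rw [Algebra.TensorProduct.tmul_mul_tmul, auxPsiT_tmul, one_mul, auxPsi_tmul,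
      TensorProduct.tmul_smul, mul_smul_comm]
  | add p q hp hq => simp only [TensorProduct.tmul_add, map_add, mul_add, hp, hq]

/-- Key computation for Lemma B'. -/
lemma auxPsiT_assoc_b (y : A) (P Q : A ⊗[K] A) :
    auxPsiT ε y (((TensorProduct.assoc K A A A).symm ((1 : A) ⊗ₜ[K] P)) *
      (Q ⊗ₜ[K] (1 : A))) =
    ((1 : A) ⊗ₜ[K] auxPsi ε y P) * Q := by
  induction P using TensorProduct.induction_on with
  | zero => simp [TensorProduct.tmul_zero]
  | tmul u v =>
    rw [TensorProduct.assoc_symm_tmul]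
    rw [Algebra.TensorProduct.tmul_mul_tmul, mul_one, auxPsiT_tmul, auxPsi_tmul,
      TensorProduct.tmul_smul, smul_mul_assoc]
  | add p q hp hq => simp only [TensorProduct.tmul_add, map_add, add_mul, hp, hq]

end Aux

/-- In a weak bialgebra `A` over a field `K`, the subsets
`A^L = Π^L(A)` and `A^R = Π^R(A)` are unital subalgebras (both contain `1` and are
closed under multiplication), and every element of `A^L` commutes with every element
of `A^R`. -/
theorem weakBialgebra_piL_piR_subalgebras_and_commute
    (K : Type*) [Field K] (A : Type*) [Ring A] [Algebra K A] [FiniteDimensional K A]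
    (Δ : A →ₗ[K] A ⊗[K] A) (ε : A →ₗ[K] K) (hA : WeakBialgebra K A Δ ε) :
    (1 : A) ∈ Set.range ⇑(piL K A Δ ε) ∧
    (1 : A) ∈ Set.range ⇑(piR K A Δ ε) ∧
    (∀ a b : A, a ∈ Set.range ⇑(piL K A Δ ε) → b ∈ Set.range ⇑(piL K A Δ ε) →
      a * b ∈ Set.range ⇑(piL K A Δ ε)) ∧
    (∀ a b : A, a ∈ Set.range ⇑(piR K A Δ ε) → b ∈ Set.range ⇑(piR K A Δ ε) →
      a * b ∈ Set.range ⇑(piR K A Δ ε)) ∧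
    (∀ xL yR : A, xL ∈ Set.range ⇑(piL K A Δ ε) → yR ∈ Set.range ⇑(piR K A Δ ε) →
      xL * yR = yR * xL) := by
  -- Lemma B : `Δ(Π^L x) = Δ(1) (Π^L x ⊗ 1)`
  have hB : ∀ x : A, Δ (piL K A Δ ε x) = Δ 1 * ((piL K A Δ ε x) ⊗ₜ[K] (1 : A)) := by
    intro x
    have h1 : Δ (piL K A Δ ε x) = auxPhiT ε x (Δ.lTensor A (Δ 1)) := by
      rw [auxPhiT_lTensor, auxPhi_comul_one]
    rw [h1, ← hA.coassoc 1, hA.weak_comul_unit_b, auxPhiT_assoc_b, auxPhi_comul_one]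
  -- Lemma A' : `Δ(Π^R y) = Δ(1) (1 ⊗ Π^R y)`
  have hA' : ∀ y : A, Δ (piR K A Δ ε y) = Δ 1 * ((1 : A) ⊗ₜ[K] piR K A Δ ε y) := by
    intro y
    have h1 : Δ (piR K A Δ ε y) = auxPsiT ε y (Δ.rTensor A (Δ 1)) := by
      rw [auxPsiT_rTensor, auxPsi_comul_one]
    rw [h1, hA.weak_comul_unit_a, auxPsiT_assoc_a, auxPsi_comul_one]
  -- Lemma B' : `Δ(Π^R y) = (1 ⊗ Π^R y) Δ(1)`
  have hB' : ∀ y : A, Δ (piR K A Δ ε y) = ((1 : A) ⊗ₜ[K] piR K A Δ ε y) * Δ 1 := by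
    intro y
    have h1 : Δ (piR K A Δ ε y) = auxPsiT ε y (Δ.rTensor A (Δ 1)) := by
      rw [auxPsiT_rTensor, auxPsi_comul_one]
    rw [h1, hA.weak_comul_unit_b, auxPsiT_assoc_b, auxPsi_comul_one]
  -- Recovery lemmas
  have hR1 : ∀ z : A, Δ z = Δ 1 * (z ⊗ₜ[K] (1 : A)) → piL K A Δ ε z = z := by
    intro z hz
    have h1 : piL K A Δ ε z =
        (TensorProduct.lid K A) (ε.rTensor A (Δ 1 * (z ⊗ₜ[K] (1 : A)))) := by
      simp [piL]
    rw [h1, ← hz, hA.counit_left]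
  have hR2 : ∀ z : A, Δ z = ((1 : A) ⊗ₜ[K] z) * Δ 1 → piR K A Δ ε z = z := by
    intro z hz
    have h1 : piR K A Δ ε z =
        (TensorProduct.rid K A) (ε.lTensor A (((1 : A) ⊗ₜ[K] z) * Δ 1)) := by
      simp [piR]
    rw [h1, ← hz, hA.counit_right]
  refine ⟨⟨1, hR1 1 (by rw [← Algebra.TensorProduct.one_def, mul_one])⟩,
    ⟨1, hR2 1 (by rw [← Algebra.TensorProduct.one_def, one_mul])⟩, ?_, ?_, ?_⟩
  · rintro a b ⟨x, rfl⟩ ⟨y, rfl⟩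
    refine ⟨piL K A Δ ε x * piL K A Δ ε y, hR1 _ ?_⟩
    have h2 : Δ (piL K A Δ ε x) * Δ 1 = Δ (piL K A Δ ε x) := by
      rw [← hA.comul_mul, mul_one]
    calc Δ (piL K A Δ ε x * piL K A Δ ε y)
        = Δ (piL K A Δ ε x) * Δ (piL K A Δ ε y) := hA.comul_mul _ _
      _ = Δ (piL K A Δ ε x) * (Δ 1 * (piL K A Δ ε y ⊗ₜ[K] (1 : A))) := by rw [hB y]
      _ = (Δ (piL K A Δ ε x) * Δ 1) * (piL K A Δ ε y ⊗ₜ[K] (1 : A)) :=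
          (mul_assoc _ _ _).symm
      _ = Δ (piL K A Δ ε x) * (piL K A Δ ε y ⊗ₜ[K] (1 : A)) := by rw [h2]
      _ = (Δ 1 * (piL K A Δ ε x ⊗ₜ[K] (1 : A))) * (piL K A Δ ε y ⊗ₜ[K] (1 : A)) := by
          rw [hB x]
      _ = Δ 1 * ((piL K A Δ ε x ⊗ₜ[K] (1 : A)) * (piL K A Δ ε y ⊗ₜ[K] (1 : A))) :=
          mul_assoc _ _ _
      _ = Δ 1 * ((piL K A Δ ε x * piL K A Δ ε y) ⊗ₜ[K] (1 : A)) := by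
          rw [Algebra.TensorProduct.tmul_mul_tmul, mul_one]
  · rintro a b ⟨x, rfl⟩ ⟨y, rfl⟩
    refine ⟨piR K A Δ ε x * piR K A Δ ε y, hR2 _ ?_⟩
    have h2 : Δ 1 * Δ (piR K A Δ ε y) = Δ (piR K A Δ ε y) := by
      rw [← hA.comul_mul, one_mul]
    calc Δ (piR K A Δ ε x * piR K A Δ ε y)
        = Δ (piR K A Δ ε x) * Δ (piR K A Δ ε y) := hA.comul_mul _ _
      _ = (((1 : A) ⊗ₜ[K] piR K A Δ ε x) * Δ 1) * Δ (piR K A Δ ε y) := by rw [hB' x]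
      _ = ((1 : A) ⊗ₜ[K] piR K A Δ ε x) * (Δ 1 * Δ (piR K A Δ ε y)) :=
          mul_assoc _ _ _
      _ = ((1 : A) ⊗ₜ[K] piR K A Δ ε x) * Δ (piR K A Δ ε y) := by rw [h2]
      _ = ((1 : A) ⊗ₜ[K] piR K A Δ ε x) * (((1 : A) ⊗ₜ[K] piR K A Δ ε y) * Δ 1) := by
          rw [hB' y]
      _ = (((1 : A) ⊗ₜ[K] piR K A Δ ε x) * ((1 : A) ⊗ₜ[K] piR K A Δ ε y)) * Δ 1 :=
          (mul_assoc _ _ _).symm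
      _ = ((1 : A) ⊗ₜ[K] (piR K A Δ ε x * piR K A Δ ε y)) * Δ 1 := by
          rw [Algebra.TensorProduct.tmul_mul_tmul, one_mul]
  · rintro xL yR ⟨x, rfl⟩ ⟨y, rfl⟩
    have hcomm : Δ 1 * ((1 : A) ⊗ₜ[K] piR K A Δ ε y)
        = ((1 : A) ⊗ₜ[K] piR K A Δ ε y) * Δ 1 := by
      rw [← hA' y, hB' y]
    calc piL K A Δ ε x * piR K A Δ ε y
        = auxPhi ε x (Δ 1) * piR K A Δ ε y := by rw [auxPhi_comul_one]
      _ = auxPhi ε x (Δ 1 * ((1 : A) ⊗ₜ[K] piR K A Δ ε y)) :=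
          (auxPhi_mul_right ε x _ _).symm
      _ = auxPhi ε x (((1 : A) ⊗ₜ[K] piR K A Δ ε y) * Δ 1) := by rw [hcomm]
      _ = piR K A Δ ε y * auxPhi ε x (Δ 1) := auxPhi_mul_left ε x _ _
      _ = piR K A Δ ε y * piL K A Δ ε x := by rw [auxPhi_comul_one]
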